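/- Let A be a finite set of k positive integers and let H be a finite set of r positive integers with maximum element h_r. Then |HA| ≥ h_r(k−1) + r. -/

import Mathlib

open Finset Pointwise

/-- `itSum h A` is the sumset `hA`: integers expressible as a sum of `h` elements
of `A` (repetitions allowed); `0A = {0}`. -/
def itSum : ℕ → Finset ℤ → Finset ℤ
  | 0, _ => {0}
  | n + 1, A => A + itSum n A

/-- `sumsetH H A = ⋃ h ∈ H, hA`. -/
def sumsetH (H : Finset ℕ) (A : Finset ℤ) : Finset ℤ :=
  H.biUnion fun h => itSum h A

/-- `rSum h A` is the restricted sumset `h^A`: integers expressible as a sum of `h`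
pairwise distinct elements of `A`; `0^A = {0}`. -/
def rSum (h : ℕ) (A : Finset ℤ) : Finset ℤ :=
  (A.powersetCard h).image fun B => B.sum id

/-- `rSumH H A = ⋃ h ∈ H, h^A`. -/
def rSumH (H : Finset ℕ) (A : Finset ℤ) : Finset ℤ :=
  H.biUnion fun h => rSum h A

lemma itSum_nonempty (h : ℕ) (A : Finset ℤ) (hA : A.Nonempty) : (itSum h A).Nonempty := by
  induction h with
  | zero => exact ⟨0, by simp [itSum]⟩
  | succ n ih => exact hA.add ih

lemma itSum_card (h : ℕ) (A : Finset ℤ) (hA : A.Nonempty) :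
    h * (A.card - 1) + 1 ≤ (itSum h A).card := by
  induction h with
  | zero => simp [itSum]
  | succ n ih =>
    have hcd := cauchy_davenport_add_of_linearOrder_isCancelAdd hA (itSum_nonempty n A hA)
    have hApos : 1 ≤ A.card := hA.card_pos
    have hpos := (itSum_nonempty n A hA).card_pos
    show (n + 1) * (A.card - 1) + 1 ≤ (A + itSum n A).card
    rw [Nat.succ_mul]
    omega

lemma itSum_lower (h : ℕ) (A : Finset ℤ) (m : ℤ) (hm : ∀ a ∈ A, m ≤ a) :
    ∀ x ∈ itSum h A, (h : ℤ) * m ≤ x := by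
  induction h with
  | zero => intro x hx; simp [itSum] at hx; simp [hx]
  | succ n ih =>
    intro x hx
    rw [show itSum (n+1) A = A + itSum n A from rfl, Finset.mem_add] at hx
    obtain ⟨a, ha, y, hy, rfl⟩ := hx
    have := ih y hy
    have := hm a ha
    push_cast
    nlinarith

theorem sumset_card_lower_bound (k r hr : ℕ) (A : Finset ℤ) (H : Finset ℕ)
    (hAne : A.Nonempty) (hHne : H.Nonempty)
    (hApos : ∀ a ∈ A, 0 < a) (hHpos : ∀ h ∈ H, 0 < h)
    (hk : A.card = k) (hrcard : H.card = r)
    (hmax : H.max' hHne = hr) :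
    hr * (k - 1) + r ≤ (sumsetH H A).card := by
  subst hk hrcard hmax
  set m := A.min' hAne with hm
  have hmA : m ∈ A := A.min'_mem hAne
  have hmpos : 0 < m := hApos m hmA
  have hmle : ∀ a ∈ A, m ≤ a := fun a ha => A.min'_le a ha
  set hr := H.max' hHne with hhr
  have hhrmem : hr ∈ H := H.max'_mem hHne
  -- the small elements: for each h ∈ H.erase hr, the element h * m
  set S : Finset ℤ := (H.erase hr).image fun h : ℕ => (h : ℤ) * m with hS
  -- S ⊆ sumsetH, itSum hr A ⊆ sumsetH, disjoint
  have hmul_mem : ∀ h : ℕ, (h : ℤ) * m ∈ itSum h A := by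
    intro h
    induction h with
    | zero => simp [itSum]
    | succ n ih =>
      rw [show itSum (n+1) A = A + itSum n A from rfl, Finset.mem_add]
      exact ⟨m, hmA, (n : ℤ) * m, ih, by push_cast; ring⟩
  have hSsub : S ⊆ sumsetH H A := by
    intro x hx
    simp only [hS, mem_image] at hx
    obtain ⟨h, hh, rfl⟩ := hx
    exact Finset.mem_biUnion.2 ⟨h, mem_of_mem_erase hh, hmul_mem h⟩
  have hTsub : itSum hr A ⊆ sumsetH H A := fun x hx =>
    Finset.mem_biUnion.2 ⟨hr, hhrmem, hx⟩
  have hdisj : Disjoint S (itSum hr A) := by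
    rw [Finset.disjoint_left]
    intro x hx hx'
    simp only [hS, mem_image] at hx
    obtain ⟨h, hh, rfl⟩ := hx
    have hlt : h < hr := lt_of_le_of_ne (H.le_max' h (mem_of_mem_erase hh)) (ne_of_mem_erase hh)
    have := itSum_lower hr A m hmle _ hx'
    have : (hr : ℤ) * m ≤ (h : ℤ) * m := this
    have hlt' : (h : ℤ) < hr := by exact_mod_cast hlt
    nlinarith
  have hScard : S.card = H.card - 1 := by
    rw [hS, Finset.card_image_of_injective _ (fun a b hab =>
      Nat.cast_injective (mul_right_cancel₀ hmpos.ne' hab))]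
    rw [Finset.card_erase_of_mem hhrmem]
  have hTcard := itSum_card hr A hAne
  have hUnion : (S ∪ itSum hr A).card = S.card + (itSum hr A).card :=
    Finset.card_union_of_disjoint hdisj
  have hsub : S ∪ itSum hr A ⊆ sumsetH H A := Finset.union_subset hSsub hTsub
  have := Finset.card_le_card hsub
  have hHpos' : 1 ≤ H.card := hHne.card_pos
  omega
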